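/- As λ → 0, the GLG density f_λ(u) converges pointwise to the standard normal density (1/√(2π)) exp(−u²/2) for every u ∈ ℝ. -/

import Mathlib

open Filter Real Set


noncomputable def sSeq (n : ℕ) : ℝ :=
  Real.log n.factorial - ((n : ℝ) + 1/2) * Real.log n + n

lemma sSeq_tendsto :
    Tendsto sSeq atTop (nhds (Real.log (Real.sqrt (2 * Real.pi)))) := by
  have h := Stirling.tendsto_stirlingSeq_sqrt_pi
  have hlog : Tendsto (fun n => Real.log (Stirling.stirlingSeq n)) atTop
      (nhds (Real.log (Real.sqrt Real.pi))) :=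
    (Real.continuousAt_log (by positivity)).tendsto.comp h
  have h2 : Tendsto (fun n => Real.log (Stirling.stirlingSeq n) + (1/2) * Real.log 2)
      atTop (nhds (Real.log (Real.sqrt Real.pi) + (1/2) * Real.log 2)) :=
    hlog.add_const _
  have heq : ∀ᶠ n : ℕ in atTop,
      Real.log (Stirling.stirlingSeq n) + (1/2) * Real.log 2 = sSeq n := by
    filter_upwards [eventually_ge_atTop 1] with n hn
    have hn0 : (0 : ℝ) < n := by exact_mod_cast hn
    have hfac : (0 : ℝ) < n.factorial := by exact_mod_cast n.factorial_pos
    rw [Stirling.stirlingSeq, Real.log_div (ne_of_gt hfac) (by positivity),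
      Real.log_mul (by positivity) (by positivity), Real.log_sqrt (by positivity),
      Real.log_pow, Real.log_div (ne_of_gt hn0) (by positivity),
      Real.log_mul two_ne_zero (ne_of_gt hn0), Real.log_exp, sSeq]
    ring
  have hval : Real.log (Real.sqrt Real.pi) + (1/2) * Real.log 2
      = Real.log (Real.sqrt (2 * Real.pi)) := by
    rw [Real.log_sqrt Real.pi_pos.le, Real.log_sqrt (by positivity),
      Real.log_mul two_ne_zero (ne_of_gt Real.pi_pos)]
    ring
  rw [← hval]
  exact h2.congr' heq


lemma logGamma_upper {x : ℝ} (hx : 2 ≤ x) :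
    Real.log (Real.Gamma x) ≤
      Real.log (Nat.factorial ⌊x⌋₊) - (1 - (x - ⌊x⌋₊)) * Real.log ⌊x⌋₊ := by
  set n : ℕ := ⌊x⌋₊ with hn
  have hn2 : 2 ≤ n := Nat.le_floor (by exact_mod_cast hx)
  have hn0 : (0 : ℝ) < n := by exact_mod_cast Nat.lt_of_lt_of_le (by norm_num) hn2
  have hfl : (n : ℝ) ≤ x := Nat.floor_le (by linarith)
  have hfl2 : x < n + 1 := Nat.lt_floor_add_one x
  set θ : ℝ := x - n with hθ
  have hθ0 : 0 ≤ θ := by simp [hθ]; linarith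
  have hθ1 : θ < 1 := by simp [hθ]; linarith
  have hc := Real.convexOn_log_Gamma.2 (mem_Ioi.2 hn0)
    (mem_Ioi.2 (by linarith : (0:ℝ) < (n:ℝ) + 1)) (by linarith : (0:ℝ) ≤ 1 - θ)
    hθ0 (by ring)
  have hx' : (1 - θ) • (n : ℝ) + θ • ((n : ℝ) + 1) = x := by
    simp only [smul_eq_mul]; ring
  rw [hx'] at hc
  -- Γ(n+1) = n! and Γ(n+1) = n * Γ(n)
  have hg1 : Real.Gamma ((n : ℝ) + 1) = Nat.factorial n := Real.Gamma_nat_eq_factorial n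
  have hg2 : Real.Gamma ((n : ℝ) + 1) = (n : ℝ) * Real.Gamma n :=
    Real.Gamma_add_one (ne_of_gt hn0)
  have hΓn : 0 < Real.Gamma (n : ℝ) := Real.Gamma_pos_of_pos hn0
  have hlogn : Real.log (Real.Gamma (n : ℝ)) = Real.log (Nat.factorial n) - Real.log n := by
    rw [← hg1, hg2, Real.log_mul (ne_of_gt hn0) (ne_of_gt hΓn)]; ring
  simp only [Function.comp, smul_eq_mul] at hc
  rw [hlogn, hg1] at hc
  calc Real.log (Real.Gamma x) ≤ (1 - θ) * (Real.log (Nat.factorial n) - Real.log n)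
        + θ * Real.log (Nat.factorial n) := hc
    _ = Real.log (Nat.factorial n) - (1 - θ) * Real.log n := by ring

lemma logGamma_lower {x : ℝ} (hx : 2 ≤ x) :
    Real.log (Nat.factorial ⌊x⌋₊) ≤
      Real.log (Real.Gamma x) + (1 - (x - ⌊x⌋₊)) * Real.log x := by
  set n : ℕ := ⌊x⌋₊ with hn
  have hx0 : (0 : ℝ) < x := by linarith
  have hfl : (n : ℝ) ≤ x := Nat.floor_le (by linarith)
  have hfl2 : x < n + 1 := Nat.lt_floor_add_one x
  set θ : ℝ := x - n with hθ
  have hθ0 : 0 ≤ θ := by simp [hθ]; linarith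
  have hθ1 : θ < 1 := by simp [hθ]; linarith
  have hc := Real.convexOn_log_Gamma.2 (mem_Ioi.2 hx0)
    (mem_Ioi.2 (by linarith : (0:ℝ) < x + 1)) hθ0 (by linarith : (0:ℝ) ≤ 1 - θ) (by ring)
  have hx' : θ • x + (1 - θ) • (x + 1) = (n : ℝ) + 1 := by
    simp only [smul_eq_mul, hθ]; ring
  rw [hx'] at hc
  have hΓx : 0 < Real.Gamma x := Real.Gamma_pos_of_pos hx0
  have hg1 : Real.Gamma ((n : ℝ) + 1) = Nat.factorial n := Real.Gamma_nat_eq_factorial n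
  have hg2 : Real.Gamma (x + 1) = x * Real.Gamma x := Real.Gamma_add_one (ne_of_gt hx0)
  simp only [Function.comp, smul_eq_mul] at hc
  rw [hg1, hg2, Real.log_mul (ne_of_gt hx0) (ne_of_gt hΓx)] at hc
  calc Real.log (Nat.factorial n)
      ≤ θ * Real.log (Real.Gamma x) + (1 - θ) * (Real.log x + Real.log (Real.Gamma x)) := hc
    _ = Real.log (Real.Gamma x) + (1 - θ) * Real.log x := by ring

noncomputable def Lfun (x : ℝ) : ℝ :=
  Real.log (Real.Gamma x) - (x - 1/2) * Real.log x + x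

lemma Lfun_bounds {x : ℝ} (hx : 2 ≤ x) :
    sSeq ⌊x⌋₊ - 1/(2 * ⌊x⌋₊) ≤ Lfun x ∧ Lfun x ≤ sSeq ⌊x⌋₊ + 1/(2 * ⌊x⌋₊) := by
  set n : ℕ := ⌊x⌋₊ with hn
  have hn2 : 2 ≤ n := Nat.le_floor (by exact_mod_cast hx)
  have hn0 : (0 : ℝ) < n := by exact_mod_cast Nat.lt_of_lt_of_le (by norm_num) hn2
  have hfl : (n : ℝ) ≤ x := Nat.floor_le (by linarith)
  have hfl2 : x < n + 1 := Nat.lt_floor_add_one x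
  have hx0 : (0 : ℝ) < x := by linarith
  have hθ0 : 0 ≤ x - (n : ℝ) := by linarith
  have hθ1 : x - (n : ℝ) < 1 := by linarith
  have hlog_le : Real.log x - Real.log n ≤ (x - n) / n := by
    have h := Real.log_le_sub_one_of_pos (show 0 < x / n by positivity)
    rw [Real.log_div (ne_of_gt hx0) (ne_of_gt hn0)] at h
    have h2 : x / (n:ℝ) - 1 = (x - n) / n := by field_simp
    linarith [h2 ▸ h]
  have hlog_ge : (x - n) / x ≤ Real.log x - Real.log n := by
    have h := Real.one_sub_inv_le_log_of_pos (show 0 < x / n by positivity)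
    rw [Real.log_div (ne_of_gt hx0) (ne_of_gt hn0)] at h
    have h2 : 1 - (x / (n:ℝ))⁻¹ = (x - n) / x := by
      rw [inv_div]; field_simp
    linarith [h2 ▸ h]
  constructor
  · have h1 := logGamma_lower hx
    rw [← hn] at h1
    have key : Lfun x - sSeq n ≥ (x - n) - ((n : ℝ) + 1/2) * (Real.log x - Real.log n) := by
      simp only [Lfun, sSeq]
      nlinarith [h1]
    have h2 : ((n : ℝ) + 1/2) * (Real.log x - Real.log n) ≤ ((n:ℝ) + 1/2) * ((x - n) / n) := by
      apply mul_le_mul_of_nonneg_left hlog_le (by positivity)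
    have h3 : (x - (n:ℝ)) - ((n:ℝ) + 1/2) * ((x - n) / n) = -((x - n) / (2*n)) := by
      field_simp; ring
    have h4 : (x - (n:ℝ)) / (2*n) ≤ 1/(2*(n:ℝ)) :=
      div_le_div_of_nonneg_right ?_ ?_ |>.trans_eq rfl
    · linarith
    · exact hθ1.le
    · positivity
  · have h1 := logGamma_upper hx
    rw [← hn] at h1
    have key : Lfun x - sSeq n ≤ (x - n) - (x - 1/2) * (Real.log x - Real.log n) := by
      simp only [Lfun, sSeq]
      nlinarith [h1]
    have h2 : (x - 1/2) * ((x - n) / x) ≤ (x - 1/2) * (Real.log x - Real.log n) := by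
      apply mul_le_mul_of_nonneg_left hlog_ge (by linarith)
    have h3 : (x - (n:ℝ)) - (x - 1/2) * ((x - n) / x) = (x - n) / (2*x) := by
      field_simp; ring
    have h4 : (x - (n:ℝ)) / (2*x) ≤ 1/(2*(n:ℝ)) :=
      div_le_div₀ zero_le_one hθ1.le (by positivity) (by linarith)
    linarith

lemma Lfun_tendsto :
    Tendsto Lfun atTop (nhds (Real.log (Real.sqrt (2 * Real.pi)))) := by
  have hfloor : Tendsto (fun x : ℝ => ⌊x⌋₊) atTop atTop := tendsto_nat_floor_atTop
  have hs : Tendsto (fun x : ℝ => sSeq ⌊x⌋₊) atTop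
      (nhds (Real.log (Real.sqrt (2 * Real.pi)))) := sSeq_tendsto.comp hfloor
  have hz : Tendsto (fun x : ℝ => 1/(2 * (⌊x⌋₊ : ℝ))) atTop (nhds 0) := by
    have h1 : Tendsto (fun n : ℕ => 1/(2 * (n:ℝ))) atTop (nhds 0) :=
      (tendsto_const_div_atTop_nhds_zero_nat (1/2)).congr fun n => div_div 1 2 _
    exact h1.comp hfloor
  have hlo := hs.sub hz
  have hhi := hs.add hz
  rw [sub_zero] at hlo; rw [add_zero] at hhi
  refine tendsto_of_tendsto_of_tendsto_of_le_of_le' hlo hhi ?_ ?_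
  · filter_upwards [eventually_ge_atTop (2:ℝ)] with x hx using (Lfun_bounds hx).1
  · filter_upwards [eventually_ge_atTop (2:ℝ)] with x hx using (Lfun_bounds hx).2

lemma gamma_stirling_inv :
    Tendsto (fun x : ℝ => x ^ (x - 1/2) * Real.exp (-x) / Real.Gamma x) atTop
      (nhds (Real.sqrt (2 * Real.pi))⁻¹) := by
  have h := (Real.continuous_exp.tendsto _).comp Lfun_tendsto.neg
  have hval : Real.exp (-(Real.log (Real.sqrt (2 * Real.pi)))) = (Real.sqrt (2 * Real.pi))⁻¹ := by
    rw [Real.exp_neg, Real.exp_log (by positivity)]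
  rw [← hval]
  refine h.congr' ?_
  filter_upwards [eventually_ge_atTop (2:ℝ)] with x hx
  have hx0 : (0:ℝ) < x := by linarith
  have hΓ : 0 < Real.Gamma x := Real.Gamma_pos_of_pos hx0
  have hrw : x ^ (x - 1/2) * Real.exp (-x) / Real.Gamma x
      = Real.exp (Real.log x * (x - 1/2) + -x - Real.log (Real.Gamma x)) := by
    rw [Real.exp_sub, Real.exp_add, Real.exp_log hΓ, Real.rpow_def_of_pos hx0]
  simp only [Function.comp, Lfun]
  rw [hrw]
  congr 1
  ring

lemma zpow_neg_two_eq (lam : ℝ) : lam ^ (-2 : ℤ) = (lam ^ 2)⁻¹ := by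
  rw [zpow_neg]
  norm_cast

lemma tendsto_zpow_neg_two : Tendsto (fun lam : ℝ => lam ^ (-2 : ℤ)) (nhdsWithin 0 {0}ᶜ) atTop := by
  have hsq : Tendsto (fun lam : ℝ => lam ^ 2) (nhdsWithin 0 {0}ᶜ) (nhdsWithin 0 (Set.Ioi 0)) := by
    apply tendsto_nhdsWithin_of_tendsto_nhds_of_eventually_within
    · have h : Tendsto (fun lam : ℝ => lam ^ 2) (nhds 0) (nhds ((0:ℝ) ^ 2)) :=
        (continuous_pow 2).tendsto 0
      simpa using h.mono_left (nhdsWithin_le_nhds (s := {0}ᶜ))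
    · filter_upwards [self_mem_nhdsWithin] with lam hlam
      have : lam ≠ 0 := hlam
      exact Set.mem_Ioi.2 (by positivity)
  have h2 := tendsto_inv_nhdsGT_zero.comp hsq
  refine h2.congr fun lam => ?_
  show (lam ^ 2)⁻¹ = lam ^ (-2 : ℤ)
  rw [zpow_neg_two_eq]

lemma exponent_tendsto (u : ℝ) :
    Tendsto (fun lam : ℝ => lam ^ (-2 : ℤ) * (lam * u - Real.exp (lam * u)) + lam ^ (-2 : ℤ))
      (nhdsWithin 0 {0}ᶜ) (nhds (-u ^ 2 / 2)) := by
  set E : ℝ → ℝ := fun lam => lam ^ (-2 : ℤ) * (lam * u - Real.exp (lam * u)) + lam ^ (-2 : ℤ)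
  have hdiff : Tendsto (fun lam => E lam - (-u ^ 2 / 2)) (nhdsWithin 0 {0}ᶜ) (nhds 0) := by
    apply squeeze_zero_norm' (a := fun lam : ℝ => 2/9 * |u| ^ 3 * |lam|)
    · have hsm : ∀ᶠ lam : ℝ in nhdsWithin 0 {0}ᶜ, |lam * u| ≤ 1 := by
        have ht : Tendsto (fun lam : ℝ => |lam * u|) (nhdsWithin 0 {0}ᶜ) (nhds 0) := by
          have h : Tendsto (fun lam : ℝ => |lam * u|) (nhds 0) (nhds |0 * u|) :=
            (continuous_abs.comp (continuous_id.mul continuous_const)).tendsto 0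
          simpa using h.mono_left (nhdsWithin_le_nhds (s := {0}ᶜ))
        exact (ht.eventually_lt_const one_pos).mono fun lam h => h.le
      filter_upwards [hsm, self_mem_nhdsWithin] with lam hle (hlam : lam ≠ 0)
      have hb := Real.exp_bound hle (n := 3) (by norm_num)
      have hsum : (∑ i ∈ Finset.range 3, (lam * u) ^ i / (Nat.factorial i)) =
          1 + lam * u + (lam * u) ^ 2 / 2 := by
        norm_num [Finset.sum_range_succ]
      rw [hsum] at hb
      have hl2 : (0:ℝ) < lam ^ 2 := by positivity
      have hE : E lam - (-u ^ 2 / 2) =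
          -((Real.exp (lam * u) - (1 + lam * u + (lam * u) ^ 2 / 2)) / lam ^ 2) := by
        simp only [E, zpow_neg_two_eq]
        field_simp
        ring
      rw [hE, norm_neg, norm_div]
      have hnorm2 : ‖lam ^ 2‖ = lam ^ 2 := by
        rw [Real.norm_eq_abs, abs_of_pos hl2]
      rw [hnorm2]
      have hb' : ‖Real.exp (lam * u) - (1 + lam * u + (lam * u) ^ 2 / 2)‖ ≤
          |lam * u| ^ 3 * (2/9) := by
        rw [Real.norm_eq_abs]
        convert hb using 2
        norm_num [Nat.factorial]
      have h3 : |lam * u| ^ 3 = |lam| ^ 3 * |u| ^ 3 := by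
        rw [abs_mul, mul_pow]
      calc ‖Real.exp (lam * u) - (1 + lam * u + (lam * u) ^ 2 / 2)‖ / lam ^ 2
          ≤ |lam * u| ^ 3 * (2/9) / lam ^ 2 := by
            gcongr
        _ = 2/9 * |u| ^ 3 * |lam| := by
            have habs : |lam| ≠ 0 := by simpa using hlam
            have hcube : |lam| ^ 3 = lam ^ 2 * |lam| := by
              rw [pow_succ, sq_abs]
            rw [h3, hcube]
            field_simp
    · have h : Tendsto (fun lam : ℝ => 2/9 * |u| ^ 3 * |lam|) (nhds 0) (nhds (2/9 * |u|^3 * |(0:ℝ)|)) :=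
        (continuous_const.mul continuous_abs).tendsto 0
      have h' := h.mono_left (nhdsWithin_le_nhds (s := {0}ᶜ))
      simpa using h'
  have h := hdiff.add_const (-u ^ 2 / 2)
  simpa using h

theorem glg_density_tendsto_normal (u : ℝ) :
    Tendsto (fun lam : ℝ =>
        |lam| / Real.Gamma (lam ^ (-2 : ℤ)) * (lam ^ (-2 : ℤ)) ^ ((lam ^ (-2 : ℤ) : ℝ)) *
          Real.exp (lam ^ (-2 : ℤ) * (lam * u - Real.exp (lam * u))))
      (nhdsWithin 0 {0}ᶜ)
      (nhds (1 / Real.sqrt (2 * Real.pi) * Real.exp (-u ^ 2 / 2))) := by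
  have hA : Tendsto (fun lam : ℝ =>
      (lam ^ (-2:ℤ)) ^ ((lam ^ (-2:ℤ) : ℝ) - 1/2) * Real.exp (-(lam ^ (-2:ℤ))) /
        Real.Gamma (lam ^ (-2:ℤ))) (nhdsWithin 0 {0}ᶜ) (nhds (Real.sqrt (2 * Real.pi))⁻¹) :=
    gamma_stirling_inv.comp tendsto_zpow_neg_two
  have hexp : Tendsto (fun lam : ℝ =>
      Real.exp (lam ^ (-2 : ℤ) * (lam * u - Real.exp (lam * u)) + lam ^ (-2 : ℤ)))
      (nhdsWithin 0 {0}ᶜ) (nhds (Real.exp (-u ^ 2 / 2))) :=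
    (Real.continuous_exp.tendsto _).comp (exponent_tendsto u)
  have hmul := hA.mul hexp
  rw [show (Real.sqrt (2 * Real.pi))⁻¹ * Real.exp (-u ^ 2 / 2)
      = 1 / Real.sqrt (2 * Real.pi) * Real.exp (-u ^ 2 / 2) by rw [one_div]] at hmul
  refine hmul.congr' ?_
  filter_upwards [self_mem_nhdsWithin] with lam (hlam : lam ≠ 0)
  set t : ℝ := lam ^ (-2 : ℤ) with ht_def
  have hzp : t = (lam ^ 2)⁻¹ := zpow_neg_two_eq lam
  have ht : 0 < t := by rw [hzp]; positivity
  have hΓ : Real.Gamma t ≠ 0 := ne_of_gt (Real.Gamma_pos_of_pos ht)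
  have habs : |lam| = (t ^ ((1:ℝ)/2))⁻¹ := by
    rw [← Real.sqrt_eq_rpow, hzp, Real.sqrt_inv, Real.sqrt_sq_eq_abs, inv_inv]
  have key : |lam| * t ^ (t : ℝ) = t ^ ((t : ℝ) - 1/2) := by
    rw [habs, ← Real.rpow_neg ht.le, ← Real.rpow_add ht]
    congr 1
    ring
  show t ^ ((t:ℝ) - 1/2) * Real.exp (-t) / Real.Gamma t
      * Real.exp (t * (lam * u - Real.exp (lam * u)) + t)
    = |lam| / Real.Gamma t * t ^ (t:ℝ) * Real.exp (t * (lam * u - Real.exp (lam * u)))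
  rw [← key]
  field_simp
  rw [← Real.exp_add]
  congr 1
  ring
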